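/- Full loading of IFDMA is possible: let m ≥ 0 and let a_0, a_1, ..., a_m be nonnegative integers with Σ_{n=0}^{m} a_n·2^n ≤ 2^m. Then there exists a partition of a subset of {0,...,2^m−1} into pairwise disjoint sets S_1,...,S_K (one set for each request, where K = Σ a_n and exactly a_n of the sets have size 2^n) such that each set of size 2^n is of the form {d + j·2^{m−n} : j = 0,...,2^n−1} for some d ∈ {0,...,2^{m−n}−1} (i.e., each set is evenly spaced with spacing 2^{m−n}). -/

import Mathlib

/-- Reverse the low `w` bits of `x` (bits beyond position `w-1` are discarded). -/
def stmt9rev : ℕ → ℕ → ℕ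
  | 0, _ => 0
  | (w+1), x => (x % 2) * 2 ^ w + stmt9rev w (x / 2)

theorem stmt9rev_lt (w x : ℕ) : stmt9rev w x < 2 ^ w := by
  induction w generalizing x with
  | zero => simp [stmt9rev]
  | succ w ih =>
    have h2 : x % 2 ≤ 1 := Nat.lt_succ_iff.mp (Nat.mod_lt _ (by norm_num))
    have := ih (x / 2)
    calc stmt9rev (w+1) x = (x % 2) * 2 ^ w + stmt9rev w (x / 2) := rfl
      _ < (x % 2) * 2 ^ w + 2 ^ w := by omega
      _ ≤ 1 * 2 ^ w + 2 ^ w := by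
          have : (x % 2) * 2 ^ w ≤ 1 * 2 ^ w := Nat.mul_le_mul_right _ h2
          omega
      _ = 2 ^ (w+1) := by ring

theorem stmt9rev_mod (w w' x : ℕ) (h : w' ≤ w) :
    stmt9rev w x % 2 ^ w' = stmt9rev w' (x / 2 ^ (w - w')) := by
  induction w generalizing x with
  | zero =>
    interval_cases w'
    simp [stmt9rev]
  | succ w ih =>
    rcases Nat.eq_or_lt_of_le h with rfl | hlt
    · rw [Nat.mod_eq_of_lt (stmt9rev_lt _ _)]
      simp
    · have h' : w' ≤ w := Nat.lt_succ_iff.mp hlt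
      have hd : (2:ℕ) ^ w' ∣ (x % 2) * 2 ^ w :=
        Dvd.dvd.mul_left (pow_dvd_pow 2 h') _
      calc stmt9rev (w+1) x % 2 ^ w'
          = ((x % 2) * 2 ^ w + stmt9rev w (x / 2)) % 2 ^ w' := rfl
        _ = stmt9rev w (x / 2) % 2 ^ w' := by
            obtain ⟨c, hc⟩ := hd
            rw [hc, Nat.mul_add_mod]
        _ = stmt9rev w' (x / 2 / 2 ^ (w - w')) := ih _ h'
        _ = stmt9rev w' (x / 2 ^ (w + 1 - w')) := by
            have hw : w + 1 - w' = (w - w') + 1 := by omega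
            rw [Nat.div_div_eq_div_mul, hw, pow_succ']

theorem stmt9rev_inj (w x y : ℕ) (hx : x < 2 ^ w) (hy : y < 2 ^ w)
    (h : stmt9rev w x = stmt9rev w y) : x = y := by
  induction w generalizing x y with
  | zero => omega
  | succ w ih =>
    have hx2 : stmt9rev w (x / 2) < 2 ^ w := stmt9rev_lt _ _
    have hy2 : stmt9rev w (y / 2) < 2 ^ w := stmt9rev_lt _ _
    have hxm : x % 2 < 2 := Nat.mod_lt _ (by norm_num)
    have hym : y % 2 < 2 := Nat.mod_lt _ (by norm_num)
    have heq : (x % 2) * 2 ^ w + stmt9rev w (x / 2)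
        = (y % 2) * 2 ^ w + stmt9rev w (y / 2) := h
    have hbit : x % 2 = y % 2 := by nlinarith
    have : stmt9rev w (x / 2) = stmt9rev w (y / 2) := by
      rw [hbit] at heq; omega
    have hxd : x / 2 < 2 ^ w := by
      have : x < 2 ^ w * 2 := by rw [← pow_succ]; exact hx
      omega
    have hyd : y / 2 < 2 ^ w := by
      have : y < 2 ^ w * 2 := by rw [← pow_succ]; exact hy
      omega
    have := ih _ _ hxd hyd this
    omega

/-- Tail sum of request sizes strictly above `n`. -/
def stmt9R (m : ℕ) (a : ℕ → ℕ) (n : ℕ) : ℕ := ∑ k ∈ Finset.Ico (n+1) (m+1), a k * 2 ^ k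

/-- Interval index for request `(n, i)`. -/
def stmt9Q (m : ℕ) (a : ℕ → ℕ) (n i : ℕ) : ℕ :=
  i + ∑ k ∈ Finset.Ico (n+1) (m+1), a k * 2 ^ (k - n)

theorem stmt9Q_mul (m : ℕ) (a : ℕ → ℕ) (n i : ℕ) :
    stmt9Q m a n i * 2 ^ n = i * 2 ^ n + stmt9R m a n := by
  unfold stmt9Q stmt9R
  rw [add_mul, Finset.sum_mul]
  congr 1
  apply Finset.sum_congr rfl
  intro k hk
  have hk' : n + 1 ≤ k := (Finset.mem_Ico.mp hk).1
  rw [mul_assoc, ← pow_add]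
  congr 2
  omega

theorem stmt9R_anti (m : ℕ) (a : ℕ → ℕ) (n n' : ℕ) (h : n < n') (h' : n' ≤ m) :
    a n' * 2 ^ n' + stmt9R m a n' ≤ stmt9R m a n := by
  unfold stmt9R
  have : a n' * 2 ^ n' + ∑ k ∈ Finset.Ico (n'+1) (m+1), a k * 2 ^ k
      = ∑ k ∈ Finset.Ico n' (m+1), a k * 2 ^ k :=
    (Finset.sum_eq_sum_Ico_succ_bot (show n' < m+1 by omega) (fun k => a k * 2 ^ k)).symm
  rw [this]
  exact Finset.sum_le_sum_of_subset (Finset.Ico_subset_Ico (by omega) le_rfl)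

theorem stmt9Q_bound (m : ℕ) (a : ℕ → ℕ)
    (hsum : ∑ n ∈ Finset.range (m + 1), a n * 2 ^ n ≤ 2 ^ m)
    (n i : ℕ) (hn : n ≤ m) (hi : i < a n) :
    (stmt9Q m a n i + 1) * 2 ^ n ≤ 2 ^ m := by
  have h1 : (stmt9Q m a n i + 1) * 2 ^ n = (i + 1) * 2 ^ n + stmt9R m a n := by
    rw [add_mul, stmt9Q_mul]; ring
  have h2 : (i + 1) * 2 ^ n ≤ a n * 2 ^ n := Nat.mul_le_mul_right _ hi
  have h3 : a n * 2 ^ n + stmt9R m a n = ∑ k ∈ Finset.Ico n (m+1), a k * 2 ^ k := by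
    unfold stmt9R
    exact (Finset.sum_eq_sum_Ico_succ_bot (show n < m+1 by omega) (fun k => a k * 2 ^ k)).symm
  have h4 : ∑ k ∈ Finset.Ico n (m+1), a k * 2 ^ k ≤ ∑ k ∈ Finset.range (m+1), a k * 2 ^ k := by
    rw [Finset.range_eq_Ico]
    exact Finset.sum_le_sum_of_subset (Finset.Ico_subset_Ico (by omega) le_rfl)
  omega

theorem stmt9Q_lt (m : ℕ) (a : ℕ → ℕ)
    (hsum : ∑ n ∈ Finset.range (m + 1), a n * 2 ^ n ≤ 2 ^ m)
    (n i : ℕ) (hn : n ≤ m) (hi : i < a n) :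
    stmt9Q m a n i < 2 ^ (m - n) := by
  have h := stmt9Q_bound m a hsum n i hn hi
  have h2 : (2:ℕ) ^ m = 2 ^ (m - n) * 2 ^ n := by rw [← pow_add]; congr 1; omega
  rw [h2] at h
  have := Nat.le_of_mul_le_mul_right h (Nat.pow_pos (by norm_num))
  omega

theorem stmt9 (m : ℕ) (a : ℕ → ℕ)
    (hsum : ∑ n ∈ Finset.range (m + 1), a n * 2 ^ n ≤ 2 ^ m) :
    ∃ d : ℕ → ℕ → ℕ,
      (∀ n ≤ m, ∀ i < a n, d n i < 2 ^ (m - n)) ∧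
      (∀ n ≤ m, ∀ i < a n, ∀ n' ≤ m, ∀ i' < a n', (n, i) ≠ (n', i') →
        Disjoint
          ((Finset.range (2 ^ n)).image (fun j => d n i + j * 2 ^ (m - n)))
          ((Finset.range (2 ^ n')).image (fun j => d n' i' + j * 2 ^ (m - n')))) := by
  refine ⟨fun n i => stmt9rev (m - n) (stmt9Q m a n i), fun n _ i _ => stmt9rev_lt _ _, ?_⟩
  have key : ∀ n i n' i', n ≤ n' → n' ≤ m → i < a n → i' < a n' → (n, i) ≠ (n', i') →
      Disjoint
        ((Finset.range (2 ^ n)).image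
          (fun j => stmt9rev (m - n) (stmt9Q m a n i) + j * 2 ^ (m - n)))
        ((Finset.range (2 ^ n')).image
          (fun j => stmt9rev (m - n') (stmt9Q m a n' i') + j * 2 ^ (m - n'))) := by
    intro n i n' i' hnn' hn'm hi hi' hne
    have hnm : n ≤ m := hnn'.trans hn'm
    rw [Finset.disjoint_left]
    rintro x hx hx'
    simp only [Finset.mem_image, Finset.mem_range] at hx hx'
    obtain ⟨j, hj, rfl⟩ := hx
    obtain ⟨j', hj', hxeq⟩ := hx'
    -- reduce both sides mod 2^(m-n')
    have hpowsplit : (2:ℕ) ^ (m - n) = 2 ^ (m - n') * 2 ^ (n' - n) := by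
      rw [← pow_add]; congr 1; omega
    have h1 : (stmt9rev (m - n) (stmt9Q m a n i) + j * 2 ^ (m - n)) % 2 ^ (m - n')
        = stmt9rev (m - n) (stmt9Q m a n i) % 2 ^ (m - n') := by
      have : j * 2 ^ (m - n) = (j * 2 ^ (n' - n)) * 2 ^ (m - n') := by
        rw [hpowsplit]; ring
      rw [this, Nat.add_mul_mod_self_right]
    have h2 : (stmt9rev (m - n') (stmt9Q m a n' i') + j' * 2 ^ (m - n')) % 2 ^ (m - n')
        = stmt9rev (m - n') (stmt9Q m a n' i') := by
      rw [Nat.add_mul_mod_self_right, Nat.mod_eq_of_lt (stmt9rev_lt _ _)]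
    have h3 : stmt9rev (m - n) (stmt9Q m a n i) % 2 ^ (m - n')
        = stmt9rev (m - n') (stmt9Q m a n' i') := by
      rw [hxeq, h1] at h2
      exact h2
    rw [stmt9rev_mod _ _ _ (by omega)] at h3
    have hsub : (m - n) - (m - n') = n' - n := by omega
    rw [hsub] at h3
    have htpos : 0 < 2 ^ (n' - n) := Nat.pow_pos (by norm_num)
    have hq1 : stmt9Q m a n i / 2 ^ (n' - n) < 2 ^ (m - n') := by
      rw [Nat.div_lt_iff_lt_mul htpos, ← hpowsplit]
      exact stmt9Q_lt m a hsum n i hnm hi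
    have hQeq : stmt9Q m a n i / 2 ^ (n' - n) = stmt9Q m a n' i' :=
      stmt9rev_inj _ _ _ hq1 (stmt9Q_lt m a hsum n' i' hn'm hi') h3
    rcases Nat.eq_or_lt_of_le hnn' with rfl | hlt
    · simp only [Nat.sub_self, pow_zero, Nat.div_one] at hQeq
      have : i = i' := by
        unfold stmt9Q at hQeq
        omega
      exact hne (by rw [this])
    · -- n < n' : derive a contradiction from interval containment
      have h4 : stmt9Q m a n i < (stmt9Q m a n' i' + 1) * 2 ^ (n' - n) := by
        rw [← Nat.div_lt_iff_lt_mul htpos, hQeq]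
        omega
      have h5 : stmt9Q m a n i * 2 ^ n < (stmt9Q m a n' i' + 1) * 2 ^ n' := by
        calc stmt9Q m a n i * 2 ^ n
            < ((stmt9Q m a n' i' + 1) * 2 ^ (n' - n)) * 2 ^ n :=
              Nat.mul_lt_mul_of_lt_of_le h4 le_rfl (Nat.pow_pos (by norm_num))
          _ = (stmt9Q m a n' i' + 1) * 2 ^ n' := by
              rw [mul_assoc, ← pow_add]
              congr 2
              omega
      have e1 : (stmt9Q m a n' i' + 1) * 2 ^ n' = (i' + 1) * 2 ^ n' + stmt9R m a n' := by
        rw [add_mul, stmt9Q_mul]; ring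
      have e2 : (i' + 1) * 2 ^ n' ≤ a n' * 2 ^ n' := Nat.mul_le_mul_right _ hi'
      have e3 := stmt9R_anti m a n n' hlt hn'm
      have e4 : stmt9R m a n ≤ stmt9Q m a n i * 2 ^ n := by
        rw [stmt9Q_mul]
        omega
      omega
  intro n hn i hi n' hn' i' hi' hne
  rcases le_total n n' with h | h
  · exact key n i n' i' h hn' hi hi' hne
  · exact (key n' i' n i h hn hi' hi (fun hc => hne (by simpa using hc.symm))).symm
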